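/- Let p ≥ 2 be an integer, let k ≥ 2, and let h, h′ be integers with 1 ≤ h, h′ < k, gcd(h,k) = 1, and h·h′ ≡ 1 (mod k). Then Σ_{d=1}^{k} Σ_{d′=1}^{k} B_{p+2}(d/k)·B_p(d′/k)·e^{−2πi d d′ h/k} = ( k·(p+2)!·p! / (2πi)^{2p+2} ) · Σ_{ℓ ∈ ℤ, ℓ ≠ 0} Σ_{ℓ′ ∈ ℤ, ℓ′ ≠ 0} e^{2πi ℓ ℓ′ h′/k} / (ℓ^{p+2}·(ℓ′)^p), where the double series on the right converges absolutely. -/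

import Mathlib

/-- The `m`-th Bernoulli polynomial evaluated at a real `x`. -/
noncomputable def bernoulliPoly (m : ℕ) (x : ℝ) : ℝ :=
  Polynomial.aeval x (Polynomial.bernoulli m)

lemma bp_eq (m : ℕ) (x : ℝ) : bernoulliPoly m x = bernoulliFun m x := by
  rw [bernoulliPoly, bernoulliFun, Polynomial.aeval_def, Polynomial.eval_map]

lemma cexp_congr (k : ℕ) (hk : k ≠ 0) {a b : ℤ} (hab : (k : ℤ) ∣ a - b) :
    Complex.exp (2 * Real.pi * Complex.I * a / k) =
      Complex.exp (2 * Real.pi * Complex.I * b / k) := by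
  obtain ⟨n, hn⟩ := hab
  have hk' : (k : ℂ) ≠ 0 := Nat.cast_ne_zero.mpr hk
  have ha : (a : ℂ) = b + k * n := by
    have : a = b + k * n := by linarith
    exact_mod_cast congrArg (Int.cast : ℤ → ℂ) this
  have harg : 2 * (Real.pi : ℂ) * Complex.I * a / k
      = 2 * Real.pi * Complex.I * b / k + n * (2 * Real.pi * Complex.I) := by
    rw [ha]; field_simp
  rw [harg, Complex.exp_add, Complex.exp_int_mul_two_pi_mul_I, mul_one]

lemma sum_cexp (k : ℕ) (hk : 0 < k) (m : ℤ) :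
    ∑ d ∈ Finset.Icc 1 k, Complex.exp (2 * Real.pi * Complex.I * m * d / k)
      = if (k : ℤ) ∣ m then (k : ℂ) else 0 := by
  have hk' : (k : ℂ) ≠ 0 := Nat.cast_ne_zero.mpr hk.ne'
  have hterm : ∀ d : ℕ, 2 * (Real.pi : ℂ) * Complex.I * m * d / k
      = 2 * Real.pi * Complex.I * ((m * d : ℤ) : ℂ) / k := by
    intro d; push_cast; ring
  split_ifs with hdvd
  · have : ∀ d ∈ Finset.Icc 1 k,
        Complex.exp (2 * Real.pi * Complex.I * m * d / k) = 1 := by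
      intro d _
      rw [hterm d, cexp_congr k hk.ne' (a := m * d) (b := 0)
        (by simpa using hdvd.mul_right d)]
      simp
    rw [Finset.sum_congr rfl this]
    simp [Nat.card_Icc]
  · set w := Complex.exp (2 * Real.pi * Complex.I * m / k) with hw
    have hterm2 : ∀ d : ℕ, Complex.exp (2 * Real.pi * Complex.I * m * d / k) = w ^ d := by
      intro d
      rw [hw, ← Complex.exp_nat_mul]
      congr 1
      field_simp
    have hwk : w ^ k = 1 := by
      rw [← hterm2 k]
      have : 2 * (Real.pi : ℂ) * Complex.I * m * k / k = m * (2 * Real.pi * Complex.I) := by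
        field_simp
      rw [this, Complex.exp_int_mul_two_pi_mul_I]
    have hw1 : w ≠ 1 := by
      intro hweq
      rw [hw, Complex.exp_eq_one_iff] at hweq
      obtain ⟨n, hn⟩ := hweq
      apply hdvd
      refine ⟨n, ?_⟩
      have h2 : (2 : ℂ) * Real.pi * Complex.I ≠ 0 := by
        simp [Real.pi_ne_zero, Complex.I_ne_zero]
      have : (m : ℂ) = k * n := by
        field_simp at hn
        exact hn
      exact_mod_cast this
    have himg : Finset.Icc 1 k = Finset.image (· + 1) (Finset.range k) := by
      ext d; simp only [Finset.mem_Icc, Finset.mem_image, Finset.mem_range]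
      constructor
      · rintro ⟨h1, h2⟩; exact ⟨d - 1, by omega, by omega⟩
      · rintro ⟨j, hj, rfl⟩; omega
    rw [Finset.sum_congr rfl (fun d _ => hterm2 d), himg,
      Finset.sum_image (by intro a _ b _ hab; beta_reduce at hab; omega)]
    have : ∑ j ∈ Finset.range k, w ^ (j + 1) = w * ∑ j ∈ Finset.range k, w ^ j := by
      rw [Finset.mul_sum]; exact Finset.sum_congr rfl fun j _ => by ring
    rw [this, geom_sum_eq hw1, hwk]
    simp

lemma char_sum (k h h' : ℕ) (hk : 2 ≤ k) (hh : h < k) (hh' : h' < k)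
    (hgcd : Nat.gcd h k = 1) (hinv : h * h' ≡ 1 [MOD k]) (l1 l2 : ℤ) :
    ∑ d ∈ Finset.Icc 1 k, ∑ d' ∈ Finset.Icc 1 k,
      Complex.exp (2 * Real.pi * Complex.I * l1 * d / k) *
        Complex.exp (2 * Real.pi * Complex.I * l2 * d' / k) *
          Complex.exp (-(2 * Real.pi * Complex.I * d * d' * h / k))
      = (k : ℂ) * Complex.exp (2 * Real.pi * Complex.I * l1 * l2 * h' / k) := by
  have hk0 : 0 < k := by omega
  have hkne : k ≠ 0 := by omega
  have hk' : (k : ℂ) ≠ 0 := Nat.cast_ne_zero.mpr hkne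
  have hinner : ∀ d ∈ Finset.Icc 1 k,
      ∑ d' ∈ Finset.Icc 1 k,
        Complex.exp (2 * Real.pi * Complex.I * l1 * d / k) *
          Complex.exp (2 * Real.pi * Complex.I * l2 * d' / k) *
            Complex.exp (-(2 * Real.pi * Complex.I * d * d' * h / k))
      = Complex.exp (2 * Real.pi * Complex.I * l1 * d / k) *
          (if (k : ℤ) ∣ l2 - d * h then (k : ℂ) else 0) := by
    intro d _
    rw [← sum_cexp k hk0 (l2 - d * h), Finset.mul_sum]
    refine Finset.sum_congr rfl fun d' _ => ?_
    rw [mul_assoc, ← Complex.exp_add]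
    congr 2
    push_cast
    field_simp
    ring
  rw [Finset.sum_congr rfl hinner]
  set r : ℤ := (h' * l2) % k with hr
  have hrnn : 0 ≤ r := Int.emod_nonneg _ (by exact_mod_cast hkne)
  have hrlt : r < k := Int.emod_lt_of_pos _ (by exact_mod_cast hk0)
  set d₀ : ℕ := if r = 0 then k else r.toNat with hd₀
  have hd₀mem : d₀ ∈ Finset.Icc 1 k := by
    rw [hd₀, Finset.mem_Icc]; split_ifs with h0
    · omega
    · omega
  have hd₀cong : (k : ℤ) ∣ (d₀ : ℤ) - h' * l2 := by
    have hrdvd : (k : ℤ) ∣ r - h' * l2 := by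
      rw [hr, Int.emod_def]
      exact ⟨-((h' * l2) / k), by ring⟩
    rw [hd₀]; split_ifs with h0
    · have : (k : ℤ) ∣ h' * l2 := by
        rw [h0] at hrdvd
        exact dvd_neg.mp (by simpa using hrdvd)
      exact dvd_sub (dvd_refl _) this
    · have : ((r.toNat : ℤ)) = r := Int.toNat_of_nonneg hrnn
      rw [this]; exact hrdvd
  have hdvdhh : (k : ℤ) ∣ (h : ℤ) * h' - 1 := by
    have h1 : (k : ℤ) ∣ ((1 : ℕ) : ℤ) - ((h * h' : ℕ) : ℤ) := hinv.dvd
    push_cast at h1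
    have := dvd_neg.mpr h1
    rwa [neg_sub] at this
  have hd₀dvd : (k : ℤ) ∣ l2 - d₀ * h := by
    have heq : l2 - (d₀ : ℤ) * h
        = -l2 * ((h : ℤ) * h' - 1) - ((d₀ : ℤ) - h' * l2) * h := by ring
    rw [heq]
    exact dvd_sub (hdvdhh.mul_left _) (hd₀cong.mul_right _)
  have hcop : IsCoprime (k : ℤ) (h : ℤ) := by
    rw [Int.isCoprime_iff_gcd_eq_one, Int.gcd_natCast_natCast, Nat.gcd_comm]
    exact hgcd
  rw [Finset.sum_eq_single_of_mem d₀ hd₀mem]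
  · rw [if_pos hd₀dvd]
    have : Complex.exp (2 * Real.pi * Complex.I * l1 * d₀ / k)
        = Complex.exp (2 * Real.pi * Complex.I * l1 * l2 * h' / k) := by
      have e1 : 2 * (Real.pi : ℂ) * Complex.I * l1 * d₀ / k
          = 2 * Real.pi * Complex.I * ((l1 * d₀ : ℤ) : ℂ) / k := by push_cast; ring
      have e2 : 2 * (Real.pi : ℂ) * Complex.I * l1 * l2 * h' / k
          = 2 * Real.pi * Complex.I * ((l1 * (l2 * h') : ℤ) : ℂ) / k := by push_cast; ring
      rw [e1, e2]
      apply cexp_congr k hkne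
      have : l1 * (d₀ : ℤ) - l1 * (l2 * h') = l1 * ((d₀ : ℤ) - h' * l2) := by ring
      rw [this]
      exact hd₀cong.mul_left _
    rw [this]; ring
  · intro b hb hbne
    rw [if_neg, mul_zero]
    intro hbdvd
    apply hbne
    have hmul : (k : ℤ) ∣ ((b : ℤ) - d₀) * h := by
      have heq : ((b : ℤ) - d₀) * h = (l2 - (d₀:ℤ) * h) - (l2 - (b:ℤ) * h) := by ring
      rw [heq]; exact dvd_sub hd₀dvd hbdvd
    have hdvd2 : (k : ℤ) ∣ (b : ℤ) - d₀ := hcop.dvd_of_dvd_mul_right hmul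
    have habs : ((b : ℤ) - d₀).natAbs < k := by
      simp only [Finset.mem_Icc] at hb hd₀mem
      omega
    have hna : k ∣ ((b : ℤ) - d₀).natAbs := by
      have := Int.natAbs_dvd_natAbs.mpr hdvd2
      simpa using this
    have := Nat.eq_zero_of_dvd_of_lt hna habs
    omega

lemma summable_abs_int (m : ℕ) (hm : 2 ≤ m) :
    Summable (fun n : ℤ => 1 / |(n : ℝ)| ^ m) := by
  have := (Real.summable_one_div_int_pow.mpr (by omega : 1 < m)).abs
  refine this.congr fun n => ?_
  simp [abs_inv, abs_pow]

lemma norm_fourier_term (m : ℕ) (l : ℤ) (x : ℝ) :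
    ‖1 / (l : ℂ) ^ m * fourier l (x : UnitAddCircle)‖ = 1 / |(l : ℝ)| ^ m := by
  have h2 : ‖fourier l (x : UnitAddCircle)‖ = 1 := by
    rw [fourier_apply]; exact Circle.norm_coe _
  rw [norm_mul, h2, mul_one, norm_div, norm_one,
    norm_pow]
  norm_num [Complex.norm_intCast]

lemma summable_norm_f (m : ℕ) (hm : 2 ≤ m) (x : ℝ) :
    Summable fun l : ℤ => ‖1 / (l : ℂ) ^ m * fourier l (x : UnitAddCircle)‖ :=
  (summable_abs_int m hm).congr fun l => (norm_fourier_term m l x).symm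

set_option maxHeartbeats 1000000 in
theorem residue_sum_fourier (p k h h' : ℕ) (hp : 2 ≤ p) (hk : 2 ≤ k)
    (hh1 : 1 ≤ h) (hh : h < k) (hh'1 : 1 ≤ h') (hh' : h' < k)
    (hgcd : Nat.gcd h k = 1) (hinv : h * h' ≡ 1 [MOD k]) :
    Summable (fun l : ℤ × ℤ => ‖if l.1 = 0 ∨ l.2 = 0 then (0 : ℂ) else
      Complex.exp (2 * Real.pi * Complex.I * l.1 * l.2 * h' / k) /
        ((l.1 : ℂ) ^ (p + 2) * (l.2 : ℂ) ^ p)‖) ∧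
    ∑ d ∈ Finset.Icc 1 k, ∑ d' ∈ Finset.Icc 1 k,
        ((bernoulliPoly (p + 2) ((d : ℝ) / k) : ℂ)) *
          ((bernoulliPoly p ((d' : ℝ) / k) : ℂ)) *
            Complex.exp (-(2 * Real.pi * Complex.I * d * d' * h / k))
      = ((k : ℂ) * ((p + 2).factorial : ℂ) * (p.factorial : ℂ) /
            (2 * Real.pi * Complex.I) ^ (2 * p + 2)) *
          ∑' l : ℤ × ℤ, (if l.1 = 0 ∨ l.2 = 0 then (0 : ℂ) else
            Complex.exp (2 * Real.pi * Complex.I * l.1 * l.2 * h' / k) /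
              ((l.1 : ℂ) ^ (p + 2) * (l.2 : ℂ) ^ p)) := by
  have hk0 : 0 < k := by omega
  have hkne : k ≠ 0 := by omega
  have hk' : (k : ℂ) ≠ 0 := Nat.cast_ne_zero.mpr hkne
  have hEne : (2 * (Real.pi : ℂ) * Complex.I) ≠ 0 := by
    simp [Real.pi_ne_zero, Complex.I_ne_zero]
  -- Part 1 : summability
  have habs : ∀ l : ℤ × ℤ, ‖if l.1 = 0 ∨ l.2 = 0 then (0 : ℂ) else
      Complex.exp (2 * Real.pi * Complex.I * l.1 * l.2 * h' / k) /
        ((l.1 : ℂ) ^ (p + 2) * (l.2 : ℂ) ^ p)‖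
      ≤ (1 / |(l.1 : ℝ)| ^ (p + 2)) * (1 / |(l.2 : ℝ)| ^ p) := by
    intro l
    split_ifs with h0
    · simp only [norm_zero]
      positivity
    · apply le_of_eq
      have harg : 2 * (Real.pi : ℂ) * Complex.I * l.1 * l.2 * h' / k
          = ((2 * Real.pi * l.1 * l.2 * h' / k : ℝ) : ℂ) * Complex.I := by
        push_cast; ring
      rw [norm_div, harg, Complex.norm_exp_ofReal_mul_I, norm_mul, norm_pow, norm_pow]
      simp only [Complex.norm_intCast]
      rw [one_div, one_div, one_div, mul_inv]
  have hsum1 : Summable (fun l : ℤ × ℤ => ‖if l.1 = 0 ∨ l.2 = 0 then (0 : ℂ) else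
      Complex.exp (2 * Real.pi * Complex.I * l.1 * l.2 * h' / k) /
        ((l.1 : ℂ) ^ (p + 2) * (l.2 : ℂ) ^ p)‖) := by
    refine Summable.of_nonneg_of_le (fun l => norm_nonneg _) habs ?_
    exact (summable_abs_int (p + 2) (by omega)).mul_of_nonneg (summable_abs_int p hp)
      (fun n => by positivity) (fun n => by positivity)
  refine ⟨hsum1, ?_⟩
  -- Part 2 : the identity
  simp only [bp_eq]
  have hx : ∀ d ∈ Finset.Icc 1 k, (d : ℝ) / k ∈ Set.Icc (0 : ℝ) 1 := by
    intro d hd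
    rw [Finset.mem_Icc] at hd
    constructor
    · positivity
    · rw [div_le_one (by positivity)]
      exact_mod_cast hd.2
  set c1 : ℂ := -(2 * (Real.pi : ℂ) * Complex.I) ^ (p + 2) / ((p + 2).factorial : ℂ)
    with hc1
  set c2 : ℂ := -(2 * (Real.pi : ℂ) * Complex.I) ^ p / (p.factorial : ℂ) with hc2
  have hB1 : ∀ d ∈ Finset.Icc 1 k,
      HasSum (fun n : ℤ => 1 / (n : ℂ) ^ (p + 2) * fourier n (((d : ℝ) / k : ℝ) : UnitAddCircle))
        (c1 * (bernoulliFun (p + 2) ((d : ℝ) / k) : ℂ)) := fun d hd =>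
    hasSum_one_div_pow_mul_fourier_mul_bernoulliFun (by omega) (hx d hd)
  have hB2 : ∀ d ∈ Finset.Icc 1 k,
      HasSum (fun n : ℤ => 1 / (n : ℂ) ^ p * fourier n (((d : ℝ) / k : ℝ) : UnitAddCircle))
        (c2 * (bernoulliFun p ((d : ℝ) / k) : ℂ)) := fun d hd =>
    hasSum_one_div_pow_mul_fourier_mul_bernoulliFun hp (hx d hd)
  have hprod : ∀ x ∈ Finset.Icc 1 k ×ˢ Finset.Icc 1 k,
      HasSum (fun l : ℤ × ℤ =>
        ((1 / (l.1 : ℂ) ^ (p + 2) * fourier l.1 (((x.1 : ℝ) / k : ℝ) : UnitAddCircle)) *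
          (1 / (l.2 : ℂ) ^ p * fourier l.2 (((x.2 : ℝ) / k : ℝ) : UnitAddCircle))) *
            Complex.exp (-(2 * Real.pi * Complex.I * x.1 * x.2 * h / k)))
        ((c1 * (bernoulliFun (p + 2) ((x.1 : ℝ) / k) : ℂ)) *
          (c2 * (bernoulliFun p ((x.2 : ℝ) / k) : ℂ)) *
            Complex.exp (-(2 * Real.pi * Complex.I * x.1 * x.2 * h / k))) := by
    intro x hxmem
    rw [Finset.mem_product] at hxmem
    have hs : Summable (fun l : ℤ × ℤ =>
        (1 / (l.1 : ℂ) ^ (p + 2) * fourier l.1 (((x.1 : ℝ) / k : ℝ) : UnitAddCircle)) *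
          (1 / (l.2 : ℂ) ^ p * fourier l.2 (((x.2 : ℝ) / k : ℝ) : UnitAddCircle))) :=
      summable_mul_of_summable_norm
        (f := fun l : ℤ => 1 / (l : ℂ) ^ (p + 2) *
          fourier l (((x.1 : ℝ) / k : ℝ) : UnitAddCircle))
        (g := fun l : ℤ => 1 / (l : ℂ) ^ p *
          fourier l (((x.2 : ℝ) / k : ℝ) : UnitAddCircle))
        (summable_norm_f (p + 2) (by omega) ((x.1 : ℝ) / k))
        (summable_norm_f p hp ((x.2 : ℝ) / k))
    exact ((hB1 x.1 hxmem.1).mul (hB2 x.2 hxmem.2) hs).mul_right _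
  set c : ℂ := c1 * c2 with hc
  have hfac1 : ((p + 2).factorial : ℂ) ≠ 0 := Nat.cast_ne_zero.mpr (Nat.factorial_ne_zero _)
  have hfac2 : ((p).factorial : ℂ) ≠ 0 := Nat.cast_ne_zero.mpr (Nat.factorial_ne_zero _)
  have hcne : c ≠ 0 := by
    rw [hc, hc1, hc2]
    apply mul_ne_zero <;>
      exact div_ne_zero (neg_ne_zero.mpr (pow_ne_zero _ hEne)) (by assumption)
  apply mul_left_cancel₀ hcne
  have hcK : c * ((k : ℂ) * ((p + 2).factorial : ℂ) * (p.factorial : ℂ) /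
      (2 * Real.pi * Complex.I) ^ (2 * p + 2)) = (k : ℂ) := by
    have hpow : (2 * (Real.pi : ℂ) * Complex.I) ^ (2 * p + 2)
        = (2 * (Real.pi : ℂ) * Complex.I) ^ (p + 2) * (2 * (Real.pi : ℂ) * Complex.I) ^ p := by
      rw [← pow_add]; congr 1; omega
    rw [hc, hc1, hc2, hpow]
    have hE1 : (2 * (Real.pi : ℂ) * Complex.I) ^ (p + 2) ≠ 0 := pow_ne_zero _ hEne
    have hE2 : (2 * (Real.pi : ℂ) * Complex.I) ^ p ≠ 0 := pow_ne_zero _ hEne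
    field_simp
  conv_rhs => rw [← mul_assoc, hcK]
  calc c * ∑ d ∈ Finset.Icc 1 k, ∑ d' ∈ Finset.Icc 1 k,
        ((bernoulliFun (p + 2) ((d : ℝ) / k) : ℂ)) *
          ((bernoulliFun p ((d' : ℝ) / k) : ℂ)) *
            Complex.exp (-(2 * Real.pi * Complex.I * d * d' * h / k))
      = ∑ x ∈ Finset.Icc 1 k ×ˢ Finset.Icc 1 k,
          ((c1 * (bernoulliFun (p + 2) ((x.1 : ℝ) / k) : ℂ)) *
            (c2 * (bernoulliFun p ((x.2 : ℝ) / k) : ℂ)) *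
              Complex.exp (-(2 * Real.pi * Complex.I * x.1 * x.2 * h / k))) := by
        rw [← Finset.sum_product', Finset.mul_sum]
        exact Finset.sum_congr rfl fun x _ => by rw [hc]; ring
    _ = ∑ x ∈ Finset.Icc 1 k ×ˢ Finset.Icc 1 k, ∑' l : ℤ × ℤ,
          ((1 / (l.1 : ℂ) ^ (p + 2) * fourier l.1 (((x.1 : ℝ) / k : ℝ) : UnitAddCircle)) *
            (1 / (l.2 : ℂ) ^ p * fourier l.2 (((x.2 : ℝ) / k : ℝ) : UnitAddCircle))) *
              Complex.exp (-(2 * Real.pi * Complex.I * x.1 * x.2 * h / k)) :=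
        Finset.sum_congr rfl fun x hxm => ((hprod x hxm).tsum_eq).symm
    _ = ∑' l : ℤ × ℤ, ∑ x ∈ Finset.Icc 1 k ×ˢ Finset.Icc 1 k,
          ((1 / (l.1 : ℂ) ^ (p + 2) * fourier l.1 (((x.1 : ℝ) / k : ℝ) : UnitAddCircle)) *
            (1 / (l.2 : ℂ) ^ p * fourier l.2 (((x.2 : ℝ) / k : ℝ) : UnitAddCircle))) *
              Complex.exp (-(2 * Real.pi * Complex.I * x.1 * x.2 * h / k)) :=
        (Summable.tsum_finsetSum fun x hxm => (hprod x hxm).summable).symm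
    _ = ∑' l : ℤ × ℤ, (k : ℂ) * (if l.1 = 0 ∨ l.2 = 0 then (0 : ℂ) else
          Complex.exp (2 * Real.pi * Complex.I * l.1 * l.2 * h' / k) /
            ((l.1 : ℂ) ^ (p + 2) * (l.2 : ℂ) ^ p)) := by
        refine tsum_congr fun l => ?_
        rw [Finset.sum_product]
        by_cases h0 : l.1 = 0 ∨ l.2 = 0
        · rw [if_pos h0, mul_zero]
          refine Finset.sum_eq_zero fun d _ => Finset.sum_eq_zero fun d' _ => ?_
          rcases h0 with h0 | h0
          · rw [h0]; simp [zero_pow (by omega : p + 2 ≠ 0)]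
          · rw [h0]; simp [zero_pow (by omega : p ≠ 0)]
        · push_neg at h0
          rw [if_neg (by push_neg; exact h0)]
          have hterm : ∀ d ∈ Finset.Icc 1 k, ∀ d' ∈ Finset.Icc 1 k,
              ((1 / (l.1 : ℂ) ^ (p + 2) * fourier l.1 (((d : ℝ) / k : ℝ) : UnitAddCircle)) *
                (1 / (l.2 : ℂ) ^ p * fourier l.2 (((d' : ℝ) / k : ℝ) : UnitAddCircle))) *
                  Complex.exp (-(2 * Real.pi * Complex.I * d * d' * h / k))
              = (1 / (l.1 : ℂ) ^ (p + 2)) * (1 / (l.2 : ℂ) ^ p) *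
                  (Complex.exp (2 * Real.pi * Complex.I * l.1 * d / k) *
                    Complex.exp (2 * Real.pi * Complex.I * l.2 * d' / k) *
                      Complex.exp (-(2 * Real.pi * Complex.I * d * d' * h / k))) := by
            intro d _ d' _
            rw [fourier_coe_apply, fourier_coe_apply]
            rw [show 2 * (Real.pi : ℂ) * Complex.I * l.1 * ((d : ℝ) / k : ℝ) / ((1 : ℝ) : ℂ)
                = 2 * Real.pi * Complex.I * l.1 * d / k by push_cast; ring]
            rw [show 2 * (Real.pi : ℂ) * Complex.I * l.2 * ((d' : ℝ) / k : ℝ) / ((1 : ℝ) : ℂ)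
                = 2 * Real.pi * Complex.I * l.2 * d' / k by push_cast; ring]
            ring
          calc ∑ d ∈ Finset.Icc 1 k, ∑ d' ∈ Finset.Icc 1 k,
                ((1 / (l.1 : ℂ) ^ (p + 2) * fourier l.1 (((d : ℝ) / k : ℝ) : UnitAddCircle)) *
                  (1 / (l.2 : ℂ) ^ p * fourier l.2 (((d' : ℝ) / k : ℝ) : UnitAddCircle))) *
                    Complex.exp (-(2 * Real.pi * Complex.I * d * d' * h / k))
              = ∑ d ∈ Finset.Icc 1 k, ∑ d' ∈ Finset.Icc 1 k,
                  (1 / (l.1 : ℂ) ^ (p + 2)) * (1 / (l.2 : ℂ) ^ p) *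
                    (Complex.exp (2 * Real.pi * Complex.I * l.1 * d / k) *
                      Complex.exp (2 * Real.pi * Complex.I * l.2 * d' / k) *
                        Complex.exp (-(2 * Real.pi * Complex.I * d * d' * h / k))) :=
                Finset.sum_congr rfl fun d hd => Finset.sum_congr rfl fun d' hd' =>
                  hterm d hd d' hd'
            _ = (1 / (l.1 : ℂ) ^ (p + 2)) * (1 / (l.2 : ℂ) ^ p) *
                  ∑ d ∈ Finset.Icc 1 k, ∑ d' ∈ Finset.Icc 1 k,
                    (Complex.exp (2 * Real.pi * Complex.I * l.1 * d / k) *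
                      Complex.exp (2 * Real.pi * Complex.I * l.2 * d' / k) *
                        Complex.exp (-(2 * Real.pi * Complex.I * d * d' * h / k))) := by
                simp only [← Finset.mul_sum]
            _ = (1 / (l.1 : ℂ) ^ (p + 2)) * (1 / (l.2 : ℂ) ^ p) *
                  ((k : ℂ) * Complex.exp (2 * Real.pi * Complex.I * l.1 * l.2 * h' / k)) := by
                rw [char_sum k h h' hk hh hh' hgcd hinv l.1 l.2]
            _ = (k : ℂ) * (Complex.exp (2 * Real.pi * Complex.I * l.1 * l.2 * h' / k) /
                  ((l.1 : ℂ) ^ (p + 2) * (l.2 : ℂ) ^ p)) := by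
                have h1 : (l.1 : ℂ) ≠ 0 := Int.cast_ne_zero.mpr h0.1
                have h2 : (l.2 : ℂ) ≠ 0 := Int.cast_ne_zero.mpr h0.2
                field_simp
    _ = (k : ℂ) * ∑' l : ℤ × ℤ, (if l.1 = 0 ∨ l.2 = 0 then (0 : ℂ) else
          Complex.exp (2 * Real.pi * Complex.I * l.1 * l.2 * h' / k) /
            ((l.1 : ℂ) ^ (p + 2) * (l.2 : ℂ) ^ p)) := tsum_mul_left
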